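/- Let N ≥ 2 and let k satisfy N ≥ k ≥ N − k ≥ 0. Then there exists a graph E with exactly N edges and no loops that has exactly 2^(N−k) distinct paths of length k. -/

import Mathlib

/-- A directed graph (quiver): a set of vertices, a set of edges, and
source/target maps. -/
structure DGraph where
  V : Type
  E : Type
  s : E → V
  t : E → V

/-- `p : Fin k → G.E` is a path of length `k` iff consecutive edges are composable. -/
def DGraph.IsPath (G : DGraph) {k : ℕ} (p : Fin k → G.E) : Prop :=
  ∀ (i : ℕ) (h : i + 1 < k), G.t (p ⟨i, Nat.lt_of_succ_lt h⟩) = G.s (p ⟨i + 1, h⟩)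

/-- A graph has a loop iff it admits a path of positive length whose source
equals its target. -/
def DGraph.HasLoop (G : DGraph) : Prop :=
  ∃ (k : ℕ) (p : Fin (k + 1) → G.E), G.IsPath p ∧ G.s (p 0) = G.t (p (Fin.last k))

def myG (k m : ℕ) (hm : m ≤ k) : DGraph where
  V := Fin (k+1)
  E := Fin k ⊕ Fin m
  s := fun e => Fin.castSucc (Sum.elim id (Fin.castLE hm) e)
  t := fun e => Fin.succ (Sum.elim id (Fin.castLE hm) e)

def myPos (k m : ℕ) (hm : m ≤ k) : (myG k m hm).E → Fin k := Sum.elim id (Fin.castLE hm)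

lemma pos_path {k m : ℕ} {hm : m ≤ k} {l : ℕ} (p : Fin l → (myG k m hm).E)
    (hp : (myG k m hm).IsPath p) (i : ℕ) (hi : i < l) (h0 : 0 < l) :
    (myPos k m hm (p ⟨i, hi⟩) : ℕ) = myPos k m hm (p ⟨0, h0⟩) + i := by
  induction i with
  | zero => simp
  | succ n ih =>
    have hn : n + 1 < l := hi
    have := hp n hn
    have hv : ((Fin.succ (Sum.elim id (Fin.castLE hm) (p ⟨n, Nat.lt_of_succ_lt hn⟩)) : Fin (k+1)) : ℕ)
        = ((Fin.castSucc (Sum.elim id (Fin.castLE hm) (p ⟨n+1, hn⟩)) : Fin (k+1)) : ℕ) := by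
      exact congrArg Fin.val this
    simp only [Fin.val_succ, Fin.coe_castSucc] at hv
    have ihn := ih (Nat.lt_of_succ_lt hn)
    unfold myPos at *
    omega

/-- for N ≥ 2 and N ≥ k ≥ N - k ≥ 0 there exists a graph with exactly
N edges and no loops having exactly 2^(N-k) distinct paths of length k. -/
theorem stmt_5 (N k : ℕ) (hN : 2 ≤ N) (hkN : k ≤ N) (hNk : N - k ≤ k) :
    ∃ G : DGraph, Nat.card G.E = N ∧ ¬ G.HasLoop ∧
      Nat.card { p : Fin k → G.E // G.IsPath p } = 2 ^ (N - k) := by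
  set m := N - k with hmdef
  have hm : m ≤ k := hNk
  have hk1 : 1 ≤ k := by omega
  refine ⟨myG k m hm, ?_, ?_, ?_⟩
  · simp [myG, Nat.card_eq_fintype_card]
    omega
  · rintro ⟨l, p, hp, heq⟩
    have h0 : (0:ℕ) < l + 1 := Nat.succ_pos l
    have hv := congrArg Fin.val heq
    have hl := pos_path p hp l (Nat.lt_succ_self l) h0
    have h00 : p 0 = p ⟨0, h0⟩ := rfl
    have hlast : p (Fin.last l) = p ⟨l, Nat.lt_succ_self l⟩ := rfl
    simp only [myG, h00, hlast, Fin.coe_castSucc, Fin.val_succ] at hv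
    have hb : (myPos k m hm (p ⟨l, Nat.lt_succ_self l⟩) : ℕ) < k := Fin.is_lt _
    unfold myPos at hl
    omega
  · -- build equiv with Fin m → Bool
    have key : ∀ (p : Fin k → (myG k m hm).E), (myG k m hm).IsPath p →
        ∀ i : Fin k, (myPos k m hm (p i) : ℕ) = (i : ℕ) := by
      intro p hp i
      have h0 : 0 < k := hk1
      have h1 := pos_path p hp i i.2 h0
      have h2 := pos_path p hp (k-1) (by omega) h0
      have hb : (myPos k m hm (p ⟨k-1, by omega⟩) : ℕ) < k := Fin.is_lt _
      have : (myPos k m hm (p ⟨0, h0⟩) : ℕ) = 0 := by omega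
      have hi : p i = p ⟨(i:ℕ), i.2⟩ := rfl
      rw [hi]
      omega
    have e : { p : Fin k → (myG k m hm).E // (myG k m hm).IsPath p } ≃ (Fin m → Bool) := by
      refine
        { toFun := fun p j => (p.1 (Fin.castLE hm j)).isRight
          invFun := fun f =>
            ⟨fun i => if h : (i : ℕ) < m then
                (bif f ⟨i, h⟩ then Sum.inr ⟨i, h⟩ else Sum.inl i) else Sum.inl i, ?_⟩
          left_inv := ?_
          right_inv := ?_ }
      · intro i h
        have e1 : ∀ (j : ℕ) (hj : j < k), myPos k m hm
            (if h' : j < m then (bif f ⟨j, h'⟩ then Sum.inr ⟨j, h'⟩ else Sum.inl ⟨j, hj⟩)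
             else Sum.inl ⟨j, hj⟩) = ⟨j, hj⟩ := by
          intro j hj
          by_cases j < m
          · rename_i h'
            cases hf : f ⟨j, h'⟩ <;> simp [myPos, h', hf] <;> rfl
          · rename_i h'
            simp [myPos, h']
        show Fin.succ (Sum.elim id (Fin.castLE hm) _) = Fin.castSucc (Sum.elim id (Fin.castLE hm) _)
        have a1 := e1 i (Nat.lt_of_succ_lt h)
        have a2 := e1 (i+1) h
        unfold myPos at a1 a2
        apply Fin.ext
        simp only [Fin.val_succ, Fin.coe_castSucc]
        rw [a1, a2]
      · rintro ⟨p, hp⟩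
        apply Subtype.ext
        funext i
        have hpos := key p hp i
        dsimp only
        rcases hpi : p i with a | b
        · have ha : (a : ℕ) = (i : ℕ) := by
            have := hpos; rw [hpi] at this; simpa [myPos] using this
          have hnm : ¬ ((i:ℕ) < m) ∨ ((i:ℕ) < m) := by omega
          by_cases h : (i:ℕ) < m
          · erw [dif_pos h]
            have : (p (Fin.castLE hm ⟨(i:ℕ), h⟩)).isRight = false := by
              have : Fin.castLE hm ⟨(i:ℕ), h⟩ = i := Fin.ext rfl
              rw [this, hpi]; rfl
            rw [this]
            erw [cond_false]
            exact congrArg Sum.inl (Fin.ext ha.symm)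
          · erw [dif_neg h]
            exact congrArg Sum.inl (Fin.ext ha.symm)
        · have hb : (b : ℕ) = (i : ℕ) := by
            have := hpos; rw [hpi] at this; simpa [myPos] using this
          have h : (i:ℕ) < m := hb ▸ b.2
          erw [dif_pos h]
          have : (p (Fin.castLE hm ⟨(i:ℕ), h⟩)).isRight = true := by
            have : Fin.castLE hm ⟨(i:ℕ), h⟩ = i := Fin.ext rfl
            rw [this, hpi]; rfl
          rw [this]
          erw [cond_true]
          exact congrArg Sum.inr (Fin.ext hb.symm)
      · intro f
        funext j
        dsimp only
        have h : ((Fin.castLE hm j : Fin k) : ℕ) < m := j.2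
        erw [dif_pos h]
        have hj : (⟨((Fin.castLE hm j : Fin k) : ℕ), h⟩ : Fin m) = j := Fin.ext rfl
        rw [hj]
        cases f j <;> rfl
    rw [Nat.card_congr e]
    simp [Nat.card_eq_fintype_card]
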